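/- Let C > 0 and let μ be a Borel probability measure on Ω × Θ_C whose pushforward under each τ̃_x, x ∈ ℝ^d, equals μ. Then there exists a Borel measurable map r : Ω × Θ_C → ℝ^d with |r(ω, θ)| ≤ C everywhere such that for μ-almost every (ω, θ) and every v ∈ ℝ^d, lim_{t→+∞} θ(tv)/t = ⟨r(ω, θ), v⟩. -/

import Mathlib

open MeasureTheory Filter Topology
open scoped RealInnerProductSpace

noncomputable section

/-- Euclidean space `ℝ^d`. -/
abbrev EucSp (d : ℕ) := EuclideanSpace ℝ (Fin d)

/-- `Θ_C`: functions `θ : ℝ^d → ℝ` with `θ 0 = 0` that are Lipschitz with constant `C`. -/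
def Theta (d : ℕ) (C : ℝ) : Type :=
  {θ : EucSp d → ℝ // θ 0 = 0 ∧ ∀ x y, |θ x - θ y| ≤ C * ‖x - y‖}

/-- The distance `d(θ₁, θ₂) = sup_x |θ₁ x - θ₂ x| / (1 + |x|²)`. -/
noncomputable def thetaDist {d : ℕ} {C : ℝ} (θ₁ θ₂ : Theta d C) : ℝ :=
  ⨆ x : EucSp d, |θ₁.1 x - θ₂.1 x| / (1 + ‖x‖ ^ 2)

theorem thetaDist_term_le {d : ℕ} {C : ℝ} (θ₁ θ₂ : Theta d C) (x : EucSp d) :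
    |θ₁.1 x - θ₂.1 x| / (1 + ‖x‖ ^ 2) ≤ |C| := by
  have hx : (0:ℝ) < 1 + ‖x‖ ^ 2 := by positivity
  have a := θ₁.2.2 x 0
  have b := θ₂.2.2 x 0
  rw [θ₁.2.1] at a
  rw [θ₂.2.1] at b
  simp only [sub_zero] at a b
  have h1 : |θ₁.1 x - θ₂.1 x| ≤ |θ₁.1 x| + |θ₂.1 x| := abs_sub _ _
  rw [div_le_iff₀ hx]
  nlinarith [abs_nonneg C, norm_nonneg x, sq_nonneg (‖x‖ - 1), le_abs_self C,
    mul_nonneg (abs_nonneg C) (sq_nonneg (‖x‖ - 1)),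
    mul_nonneg (sub_nonneg.mpr (le_abs_self C)) (norm_nonneg x)]

theorem thetaDist_bddAbove {d : ℕ} {C : ℝ} (θ₁ θ₂ : Theta d C) :
    BddAbove (Set.range fun x : EucSp d => |θ₁.1 x - θ₂.1 x| / (1 + ‖x‖ ^ 2)) := by
  refine ⟨|C|, ?_⟩
  rintro y ⟨x, rfl⟩
  exact thetaDist_term_le θ₁ θ₂ x

/-- `(Θ_C, thetaDist)` is a metric space. -/
noncomputable instance {d : ℕ} {C : ℝ} : MetricSpace (Theta d C) where
  dist := thetaDist
  dist_self θ := by simp [thetaDist]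
  dist_comm θ₁ θ₂ := by
    unfold thetaDist
    exact iSup_congr fun x => by rw [abs_sub_comm]
  dist_triangle θ₁ θ₂ θ₃ := by
    refine ciSup_le fun x => ?_
    have h : |θ₁.1 x - θ₃.1 x| / (1 + ‖x‖ ^ 2) ≤
        |θ₁.1 x - θ₂.1 x| / (1 + ‖x‖ ^ 2) + |θ₂.1 x - θ₃.1 x| / (1 + ‖x‖ ^ 2) := by
      rw [← add_div]
      gcongr
      exact abs_sub_le _ _ _
    refine h.trans (add_le_add ?_ ?_)
    · exact le_ciSup (thetaDist_bddAbove θ₁ θ₂) x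
    · exact le_ciSup (thetaDist_bddAbove θ₂ θ₃) x
  eq_of_dist_eq_zero {θ₁ θ₂} h := by
    have h' : thetaDist θ₁ θ₂ = 0 := h
    apply Subtype.ext
    funext x
    have hx : (0:ℝ) < 1 + ‖x‖ ^ 2 := by positivity
    have hle : |θ₁.1 x - θ₂.1 x| / (1 + ‖x‖ ^ 2) ≤ thetaDist θ₁ θ₂ :=
      le_ciSup (thetaDist_bddAbove θ₁ θ₂) x
    rw [h'] at hle
    have h0 : 0 ≤ |θ₁.1 x - θ₂.1 x| / (1 + ‖x‖ ^ 2) := by positivity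
    have heq : |θ₁.1 x - θ₂.1 x| / (1 + ‖x‖ ^ 2) = 0 := le_antisymm hle h0
    rcases div_eq_zero_iff.mp heq with hnum | hden
    · exact sub_eq_zero.mp (abs_eq_zero.mp hnum)
    · exact absurd hden hx.ne'

instance {d : ℕ} {C : ℝ} : MeasurableSpace (Theta d C) := borel _
instance {d : ℕ} {C : ℝ} : BorelSpace (Theta d C) := ⟨rfl⟩

/-- The shift `θ ↦ θ(· + x) − θ(x)` on `Θ_C`. -/
def Theta.shift {d : ℕ} {C : ℝ} (x : EucSp d) (θ : Theta d C) : Theta d C :=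
  ⟨fun y => θ.1 (y + x) - θ.1 x, by simp [θ.2.1], fun y z => by
    have h := θ.2.2 (y + x) (z + x)
    simpa using h⟩


section LimsupHelpers

lemma bddu_of_abs_le {u : ℕ → ℝ} {B : ℝ} (h : ∀ n, |u n| ≤ B) :
    IsBoundedUnder (· ≤ ·) atTop u :=
  isBoundedUnder_of ⟨B, fun n => (abs_le.1 (h n)).2⟩

lemma bddl_of_abs_le {u : ℕ → ℝ} {B : ℝ} (h : ∀ n, |u n| ≤ B) :
    IsBoundedUnder (· ≥ ·) atTop u :=
  isBoundedUnder_of ⟨-B, fun n => (abs_le.1 (h n)).1⟩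

lemma limsup_le_limsup_of_tendsto_sub_zero {u v : ℕ → ℝ} {B B' : ℝ}
    (hu : ∀ n, |u n| ≤ B) (hv : ∀ n, |v n| ≤ B')
    (h : Tendsto (fun n => u n - v n) atTop (𝓝 0)) :
    limsup u atTop ≤ limsup v atTop := by
  refine le_of_forall_pos_le_add fun ε hε => ?_
  have h1 : ∀ᶠ n in atTop, u n ≤ v n + ε := by
    filter_upwards [Metric.tendsto_nhds.mp h ε hε] with n hn
    rw [Real.dist_eq, sub_zero] at hn
    linarith [(abs_lt.1 hn).2]
  calc limsup u atTop ≤ limsup (fun n => v n + ε) atTop :=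
        limsup_le_limsup h1 ((bddl_of_abs_le hu).isCoboundedUnder_le)
          (isBoundedUnder_of ⟨B' + ε, fun n => add_le_add (abs_le.1 (hv n)).2 le_rfl⟩)
    _ = limsup v atTop + ε :=
        limsup_add_const atTop v ε (bddu_of_abs_le hv)
          ((bddl_of_abs_le hv).isCoboundedUnder_le)

lemma limsup_eq_limsup_of_tendsto_sub_zero {u v : ℕ → ℝ} {B B' : ℝ}
    (hu : ∀ n, |u n| ≤ B) (hv : ∀ n, |v n| ≤ B')
    (h : Tendsto (fun n => u n - v n) atTop (𝓝 0)) :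
    limsup u atTop = limsup v atTop := by
  refine le_antisymm (limsup_le_limsup_of_tendsto_sub_zero hu hv h)
    (limsup_le_limsup_of_tendsto_sub_zero hv hu ?_)
  simpa using h.neg

lemma liminf_le_liminf_of_tendsto_sub_zero {u v : ℕ → ℝ} {B B' : ℝ}
    (hu : ∀ n, |u n| ≤ B) (hv : ∀ n, |v n| ≤ B')
    (h : Tendsto (fun n => u n - v n) atTop (𝓝 0)) :
    liminf u atTop ≤ liminf v atTop := by
  refine le_of_forall_pos_le_add fun ε hε => ?_
  have h1 : ∀ᶠ n in atTop, u n ≤ v n + ε := by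
    filter_upwards [Metric.tendsto_nhds.mp h ε hε] with n hn
    rw [Real.dist_eq, sub_zero] at hn
    linarith [(abs_lt.1 hn).2]
  calc liminf u atTop ≤ liminf (fun n => v n + ε) atTop :=
        liminf_le_liminf h1 (bddl_of_abs_le hu)
          ((isBoundedUnder_of ⟨B' + ε, fun n => add_le_add (abs_le.1 (hv n)).2 le_rfl⟩).isCoboundedUnder_ge)
    _ = liminf v atTop + ε :=
        liminf_add_const atTop v ε ((bddu_of_abs_le hv).isCoboundedUnder_ge)
          (bddl_of_abs_le hv)

lemma liminf_eq_liminf_of_tendsto_sub_zero {u v : ℕ → ℝ} {B B' : ℝ}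
    (hu : ∀ n, |u n| ≤ B) (hv : ∀ n, |v n| ≤ B')
    (h : Tendsto (fun n => u n - v n) atTop (𝓝 0)) :
    liminf u atTop = liminf v atTop := by
  refine le_antisymm (liminf_le_liminf_of_tendsto_sub_zero hu hv h)
    (liminf_le_liminf_of_tendsto_sub_zero hv hu ?_)
  simpa using h.neg

lemma limsup_shift (u : ℕ → ℝ) : limsup (fun n => u (n + 1)) atTop = limsup u atTop := by
  have : (fun n => u (n + 1)) = u ∘ (fun n => n + 1) := rfl
  rw [this, Filter.limsup, Filter.limsup, ← Filter.map_map, Filter.map_add_atTop_eq_nat]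

lemma liminf_shift (u : ℕ → ℝ) : liminf (fun n => u (n + 1)) atTop = liminf u atTop := by
  have : (fun n => u (n + 1)) = u ∘ (fun n => n + 1) := rfl
  rw [this, Filter.liminf, Filter.liminf, ← Filter.map_map, Filter.map_add_atTop_eq_nat]

end LimsupHelpers


section Birkhoff

variable {X : Type*} [MeasurableSpace X]

/-- Maximal function for the maximal ergodic theorem. -/
noncomputable def maxF (T : X → X) (g : X → ℝ) : ℕ → X → ℝ
  | 0 => fun _ => 0
  | (n+1) => fun x => max 0 (g x + maxF T g n (T x))

lemma maxF_nonneg (T : X → X) (g : X → ℝ) : ∀ n x, 0 ≤ maxF T g n x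
  | 0, _ => le_rfl
  | (n+1), x => le_max_left _ _

lemma maxF_meas {T : X → X} {g : X → ℝ} (hT : Measurable T) (hg : Measurable g) :
    ∀ n, Measurable (maxF T g n)
  | 0 => measurable_const
  | (n+1) => measurable_const.max (hg.add ((maxF_meas hT hg n).comp hT))

lemma maxF_bound {T : X → X} {g : X → ℝ} {B : ℝ} (hB : ∀ x, |g x| ≤ B) :
    ∀ n x, maxF T g n x ≤ n * |B|
  | 0, x => by simp [maxF]
  | (n+1), x => by
    have h1 : g x + maxF T g n (T x) ≤ |B| + n * |B| := by
      have := maxF_bound (T := T) hB n (T x)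
      have h2 := (abs_le.1 (hB x)).2
      have h3 := le_abs_self B
      push_cast
      linarith
    simp only [maxF]
    refine max_le ?_ ?_
    · positivity
    · push_cast; linarith

lemma maxF_mono (T : X → X) (g : X → ℝ) : ∀ n x, maxF T g n x ≤ maxF T g (n+1) x
  | 0, x => maxF_nonneg T g 1 x
  | (n+1), x => by
    simp only [maxF]
    exact max_le_max le_rfl (add_le_add le_rfl (maxF_mono T g n (T x)))

lemma maxF_ge_birkhoffSum (T : X → X) (g : X → ℝ) :
    ∀ n k, k ≤ n → ∀ x, birkhoffSum T g k x ≤ maxF T g n x := by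
  intro n
  induction n with
  | zero => intro k hk x; interval_cases k; simp [maxF]
  | succ n ih =>
    intro k hk x
    match k with
    | 0 => simpa [maxF_nonneg] using maxF_nonneg T g (n+1) x
    | (j+1) =>
      rw [birkhoffSum_succ']
      have := ih j (by omega) (T x)
      simp only [maxF]
      exact le_max_of_le_right (by linarith)

lemma maxF_integrable {T : X → X} {g : X → ℝ} {μ : Measure X} [IsProbabilityMeasure μ]
    (hT : Measurable T) (hg : Measurable g) {B : ℝ} (hB : ∀ x, |g x| ≤ B) (n : ℕ) :
    Integrable (maxF T g n) μ := by
  refine (integrable_const ((n : ℝ) * |B|)).mono' (maxF_meas hT hg n).aestronglyMeasurable ?_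
  refine ae_of_all _ fun x => ?_
  rw [Real.norm_eq_abs, abs_of_nonneg (maxF_nonneg T g n x)]
  exact maxF_bound hB n x

/-- Maximal ergodic theorem. -/
lemma maximal_ergodic {T : X → X} {g : X → ℝ} {μ : Measure X} [IsProbabilityMeasure μ]
    (hT : Measurable T) (hTmp : MeasurePreserving T μ μ) (hg : Measurable g)
    {B : ℝ} (hB : ∀ x, |g x| ≤ B) (n : ℕ) :
    0 ≤ ∫ x in {x | 0 < maxF T g (n+1) x}, g x ∂μ := by
  set A : Set X := {x | 0 < maxF T g (n+1) x} with hA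
  have hAmeas : MeasurableSet A := measurableSet_lt measurable_const (maxF_meas hT hg (n+1))
  have hginteg : Integrable g μ :=
    (integrable_const B).mono' hg.aestronglyMeasurable
      (ae_of_all _ fun x => by rw [Real.norm_eq_abs]; exact hB x)
  have hMn : Integrable (maxF T g n) μ := maxF_integrable hT hg hB n
  have hMnT : Integrable (maxF T g n ∘ T) μ := by
    rw [← hTmp.map_eq] at hMn
    exact hMn.comp_measurable hT |>.congr (ae_of_all _ fun x => rfl)
  -- on A, maxF n x - maxF n (T x) ≤ g x
  have key : ∀ x ∈ A, maxF T g n x - maxF T g n (T x) ≤ g x := by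
    intro x hx
    have hpos : (0 : ℝ) < max 0 (g x + maxF T g n (T x)) := hx
    have heq : maxF T g (n+1) x = g x + maxF T g n (T x) := by
      simp only [maxF]
      rcases le_or_gt (g x + maxF T g n (T x)) 0 with h | h
      · exfalso; rw [max_eq_left h] at hpos; exact lt_irrefl _ hpos
      · exact max_eq_right h.le
    have := maxF_mono T g n x
    rw [heq] at this
    linarith
  have step1 : ∫ x in A, (maxF T g n x - maxF T g n (T x)) ∂μ ≤ ∫ x in A, g x ∂μ :=
    setIntegral_mono_on (hMn.integrableOn.sub hMnT.integrableOn) hginteg.integrableOn hAmeas key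
  have step2 : ∫ x in A, (maxF T g n x - maxF T g n (T x)) ∂μ
      = ∫ x in A, maxF T g n x ∂μ - ∫ x in A, maxF T g n (T x) ∂μ :=
    integral_sub hMn.integrableOn hMnT.integrableOn
  have step3 : ∫ x in A, maxF T g n x ∂μ = ∫ x, maxF T g n x ∂μ := by
    refine setIntegral_eq_integral_of_forall_compl_eq_zero fun x hx => ?_
    have h1 : maxF T g (n+1) x ≤ 0 := not_lt.1 hx
    have h2 := maxF_nonneg T g n x
    have h3 := maxF_mono T g n x
    linarith
  have step4 : ∫ x in A, maxF T g n (T x) ∂μ ≤ ∫ x, maxF T g n (T x) ∂μ :=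
    setIntegral_le_integral hMnT (ae_of_all _ fun x => maxF_nonneg T g n (T x))
  have step5 : ∫ x, maxF T g n (T x) ∂μ = ∫ x, maxF T g n x ∂μ := by
    rw [← hTmp.map_eq, integral_map hT.aemeasurable
      ((maxF_meas hT hg n).aestronglyMeasurable), hTmp.map_eq]
  linarith

end Birkhoff

section Birkhoff2
variable {X : Type*} [MeasurableSpace X]

lemma birkhoffSum_meas {T : X → X} {g : X → ℝ} (hT : Measurable T) (hg : Measurable g) (n : ℕ) :
    Measurable (birkhoffSum T g n) := by
  unfold birkhoffSum
  exact Finset.measurable_sum _ fun k _ => hg.comp (hT.iterate k)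

/-- Key consequence of the maximal ergodic theorem. -/
lemma key_integral_nonneg {T : X → X} {g : X → ℝ} {μ : Measure X} [IsProbabilityMeasure μ]
    (hT : Measurable T) (hTmp : MeasurePreserving T μ μ) (hg : Measurable g)
    {B : ℝ} (hB : ∀ x, |g x| ≤ B) {E : Set X} (hE : MeasurableSet E)
    (hEinv : ∀ x, x ∈ E ↔ T x ∈ E) (hg0 : ∀ x ∉ E, g x = 0)
    (hpos : ∀ x ∈ E, ∃ n, 0 < birkhoffSum T g n x) :
    0 ≤ ∫ x in E, g x ∂μ := by
  set A : ℕ → Set X := fun n => {x | 0 < maxF T g (n+1) x} with hA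
  have hAmeas : ∀ n, MeasurableSet (A n) :=
    fun n => measurableSet_lt measurable_const (maxF_meas hT hg (n+1))
  have hAmono : Monotone A := by
    intro m n hmn x hx
    have : maxF T g (m+1) x ≤ maxF T g (n+1) x := by
      clear hx
      induction hmn with
      | refl => exact le_rfl
      | step h ih => exact le_trans ih (maxF_mono T g _ x)
    exact lt_of_lt_of_le hx this
  -- x ∉ E implies maxF = 0
  have hout : ∀ x ∉ E, ∀ n, maxF T g n x = 0 := by
    intro x hx n
    induction n generalizing x hx with
    | zero => rfl
    | succ n ih =>
      have hTx : T x ∉ E := fun h => hx ((hEinv x).2 h)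
      simp only [maxF, hg0 x hx, ih (T x) hTx, add_zero, max_self]
  have hsub : ∀ n, A n ⊆ E := by
    intro n x hx
    by_contra hxE
    have := hout x hxE (n+1)
    rw [hA] at hx
    simp only [Set.mem_setOf_eq, this] at hx
    exact lt_irrefl _ hx
  have hcover : E ⊆ ⋃ n, A n := by
    intro x hx
    obtain ⟨n, hn⟩ := hpos x hx
    have hn1 : 1 ≤ n := by
      by_contra h
      interval_cases n
      · simp [birkhoffSum_zero] at hn
    obtain ⟨m, rfl⟩ : ∃ m, n = m + 1 := ⟨n - 1, by omega⟩
    refine Set.mem_iUnion.2 ⟨m, ?_⟩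
    exact lt_of_lt_of_le hn (maxF_ge_birkhoffSum T g (m+1) (m+1) le_rfl x)
  have hunion : (⋃ n, A n) = E := Set.Subset.antisymm (Set.iUnion_subset hsub) hcover
  have hginteg : Integrable g μ :=
    (integrable_const B).mono' hg.aestronglyMeasurable
      (ae_of_all _ fun x => by rw [Real.norm_eq_abs]; exact hB x)
  have htend : Tendsto (fun n => ∫ x in A n, g x ∂μ) atTop (𝓝 (∫ x in ⋃ n, A n, g x ∂μ)) :=
    tendsto_setIntegral_of_monotone hAmeas hAmono hginteg.integrableOn
  rw [hunion] at htend
  exact ge_of_tendsto htend (Eventually.of_forall fun n => maximal_ergodic hT hTmp hg hB n)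

end Birkhoff2

section Birkhoff3
variable {X : Type*} [MeasurableSpace X]

/-- The two-sided bound on Birkhoff averages. -/
lemma birkhoff_avg_bound {T : X → X} {g : X → ℝ} {B : ℝ} (hB : ∀ x, |g x| ≤ B)
    (n : ℕ) (x : X) : |birkhoffSum T g n x / n| ≤ |B| := by
  rcases Nat.eq_zero_or_pos n with rfl | hn
  · simp
  · rw [abs_div, abs_of_nonneg (by positivity : (0:ℝ) ≤ (n:ℝ))]
    rw [div_le_iff₀ (by exact_mod_cast hn : (0:ℝ) < (n:ℝ))]
    calc |birkhoffSum T g n x| ≤ ∑ k ∈ Finset.range n, |g (T^[k] x)| :=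
          Finset.abs_sum_le_sum_abs _ _
      _ ≤ ∑ _k ∈ Finset.range n, |B| := Finset.sum_le_sum fun k _ => (hB _).trans (le_abs_self B)
      _ = n * |B| := by simp [mul_comm]
      _ = |B| * n := by ring

/-- Pointwise invariance of the limsup of Birkhoff averages. -/
lemma birkhoff_limsup_inv {T : X → X} {g : X → ℝ} {B : ℝ} (hB : ∀ x, |g x| ≤ B) (x : X) :
    limsup (fun n : ℕ => birkhoffSum T g n (T x) / n) atTop
      = limsup (fun n : ℕ => birkhoffSum T g n x / n) atTop ∧
    liminf (fun n : ℕ => birkhoffSum T g n (T x) / n) atTop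
      = liminf (fun n : ℕ => birkhoffSum T g n x / n) atTop := by
  have hubd : ∀ n : ℕ, |birkhoffSum T g n (T x) / n| ≤ |B| :=
    fun n => birkhoff_avg_bound hB n (T x)
  have hwbd : ∀ n : ℕ, |birkhoffSum T g (n+1) x / ((n+1 : ℕ) : ℝ)| ≤ |B| :=
    fun n => birkhoff_avg_bound hB (n+1) x
  have hdiff : Tendsto (fun n : ℕ => birkhoffSum T g n (T x) / n
      - birkhoffSum T g (n+1) x / ((n+1 : ℕ) : ℝ)) atTop (𝓝 0) := by
    have hbnd : Tendsto (fun n : ℕ => (2 * |B| + |g x|) / (n:ℝ)) atTop (𝓝 0) := by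
      simpa using tendsto_const_nhds.div_atTop (tendsto_natCast_atTop_atTop (R := ℝ))
    refine squeeze_zero_norm' ?_ hbnd
    filter_upwards [eventually_ge_atTop 1] with n hn
    have hn0 : (0:ℝ) < (n:ℝ) := by exact_mod_cast hn
    have hs : birkhoffSum T g n (T x) = birkhoffSum T g (n+1) x - g x := by
      rw [birkhoffSum_succ']; ring
    have hbd : |birkhoffSum T g (n+1) x| ≤ ((n:ℝ)+1) * |B| := by
      have h1 := birkhoff_avg_bound (T := T) hB (n+1) x
      rw [abs_div] at h1
      have h2 : |((n+1 : ℕ) : ℝ)| = (n:ℝ)+1 := by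
        rw [abs_of_nonneg (by positivity)]; push_cast; ring
      rw [h2, div_le_iff₀ (by positivity)] at h1
      linarith
    rw [Real.norm_eq_abs, hs]
    push_cast
    have key : (birkhoffSum T g (n+1) x - g x) / n - birkhoffSum T g (n+1) x / ((n:ℝ)+1)
        = birkhoffSum T g (n+1) x / ((n:ℝ) * ((n:ℝ)+1)) - g x / n := by
      field_simp
      ring
    rw [key]
    calc |birkhoffSum T g (n+1) x / ((n:ℝ) * ((n:ℝ)+1)) - g x / n|
        ≤ |birkhoffSum T g (n+1) x| / ((n:ℝ) * ((n:ℝ)+1)) + |g x| / n := by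
          refine (abs_sub _ _).trans ?_
          rw [abs_div, abs_div, abs_of_nonneg (by positivity : (0:ℝ) ≤ (n:ℝ) * ((n:ℝ)+1)),
            abs_of_nonneg hn0.le]
      _ ≤ ((n:ℝ)+1) * |B| / ((n:ℝ) * ((n:ℝ)+1)) + |g x| / n := by gcongr
      _ = (2 * |B| + |g x|) / n - |B| / n := by field_simp; ring
      _ ≤ (2 * |B| + |g x|) / n := by
          have : (0:ℝ) ≤ |B| / n := by positivity
          linarith
  constructor
  · calc limsup (fun n : ℕ => birkhoffSum T g n (T x) / n) atTop
        = limsup (fun n : ℕ => birkhoffSum T g (n+1) x / ((n+1 : ℕ) : ℝ)) atTop :=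
          limsup_eq_limsup_of_tendsto_sub_zero hubd hwbd hdiff
      _ = limsup (fun n : ℕ => birkhoffSum T g n x / n) atTop :=
          limsup_shift (fun n : ℕ => birkhoffSum T g n x / n)
  · calc liminf (fun n : ℕ => birkhoffSum T g n (T x) / n) atTop
        = liminf (fun n : ℕ => birkhoffSum T g (n+1) x / ((n+1 : ℕ) : ℝ)) atTop :=
          liminf_eq_liminf_of_tendsto_sub_zero hubd hwbd hdiff
      _ = liminf (fun n : ℕ => birkhoffSum T g n x / n) atTop :=
          liminf_shift (fun n : ℕ => birkhoffSum T g n x / n)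

/-- Birkhoff's pointwise ergodic theorem for bounded measurable functions. -/
theorem birkhoff_ae_tendsto {T : X → X} {μ : Measure X} [IsProbabilityMeasure μ]
    (hT : Measurable T) (hTmp : MeasurePreserving T μ μ) {g : X → ℝ}
    (hg : Measurable g) {B : ℝ} (hB : ∀ x, |g x| ≤ B) :
    ∀ᵐ x ∂μ, Tendsto (fun n : ℕ => birkhoffSum T g n x / n) atTop
      (𝓝 (limsup (fun n : ℕ => birkhoffSum T g n x / n) atTop)) := by
  set a : X → ℕ → ℝ := fun x n => birkhoffSum T g n x / n with ha
  have habd : ∀ x n, |a x n| ≤ |B| := fun x n => birkhoff_avg_bound hB n x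
  have hameas : ∀ n, Measurable fun x => a x n :=
    fun n => (birkhoffSum_meas hT hg n).div measurable_const
  set φ : X → ℝ := fun x => limsup (a x) atTop with hφ
  set ψ : X → ℝ := fun x => liminf (a x) atTop with hψ
  have hφmeas : Measurable φ := Measurable.limsup hameas
  have hψmeas : Measurable ψ := Measurable.liminf hameas
  have hφinv : ∀ x, φ (T x) = φ x := fun x => (birkhoff_limsup_inv hB x).1
  have hψinv : ∀ x, ψ (T x) = ψ x := fun x => (birkhoff_limsup_inv hB x).2
  -- main estimate
  have main : ∀ b c : ℝ, b < c → μ {x | ψ x < b ∧ c < φ x} = 0 := by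
    intro b c hbc
    set E : Set X := {x | ψ x < b ∧ c < φ x} with hE
    have hEmeas : MeasurableSet E :=
      (measurableSet_lt hψmeas measurable_const).inter
        (measurableSet_lt measurable_const hφmeas)
    have hEinv : ∀ x, x ∈ E ↔ T x ∈ E := by
      intro x
      simp only [hE, Set.mem_setOf_eq, hφinv, hψinv]
    have hiter : ∀ x ∈ E, ∀ k, T^[k] x ∈ E := by
      intro x hx k
      induction k with
      | zero => exact hx
      | succ k ih => rw [Function.iterate_succ_apply']; exact (hEinv _).1 ih
    -- first application: with f - c
    have hub : ∫ x in E, (g x - c) ∂μ ≥ 0 := by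
      set g₁ : X → ℝ := E.indicator (fun x => g x - c) with hg₁
      have hg₁meas : Measurable g₁ := (hg.sub measurable_const).indicator hEmeas
      have hg₁bd : ∀ x, |g₁ x| ≤ |B| + |c| := by
        intro x
        rw [hg₁]
        by_cases hx : x ∈ E
        · rw [Set.indicator_of_mem hx]
          calc |g x - c| ≤ |g x| + |c| := abs_sub _ _
            _ ≤ |B| + |c| := add_le_add ((hB x).trans (le_abs_self B)) le_rfl
        · rw [Set.indicator_of_notMem hx, abs_zero]; positivity
      have hsum : ∀ x ∈ E, ∀ n, birkhoffSum T g₁ n x = birkhoffSum T g n x - n * c := by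
        intro x hx n
        unfold birkhoffSum
        calc ∑ k ∈ Finset.range n, g₁ (T^[k] x) = ∑ k ∈ Finset.range n, (g (T^[k] x) - c) :=
              Finset.sum_congr rfl fun k _ => by rw [hg₁, Set.indicator_of_mem (hiter x hx k)]
          _ = ∑ k ∈ Finset.range n, g (T^[k] x) - n * c := by
              rw [Finset.sum_sub_distrib, Finset.sum_const, Finset.card_range]
              push_cast; ring
      have hpos : ∀ x ∈ E, ∃ n, 0 < birkhoffSum T g₁ n x := by
        intro x hx
        have hcob : IsCoboundedUnder (· ≤ ·) atTop (a x) :=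
          (bddl_of_abs_le (habd x)).isCoboundedUnder_le
        have hfreq : ∃ᶠ n in atTop, c < a x n := frequently_lt_of_lt_limsup hcob hx.2
        obtain ⟨n, hn2, hn1⟩ := (hfreq.and_eventually (eventually_ge_atTop 1)).exists
        refine ⟨n, ?_⟩
        have hn0 : (0:ℝ) < (n:ℝ) := by exact_mod_cast hn1
        have : c * n < birkhoffSum T g n x := by
          have := (lt_div_iff₀ hn0).1 hn2
          linarith
        rw [hsum x hx n]
        linarith [this]
      have hg₁0 : ∀ x ∉ E, g₁ x = 0 := fun x hx => Set.indicator_of_notMem hx _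
      have h0 := key_integral_nonneg hT hTmp hg₁meas hg₁bd hEmeas hEinv hg₁0 hpos
      calc (0:ℝ) ≤ ∫ x in E, g₁ x ∂μ := h0
        _ = ∫ x in E, (g x - c) ∂μ :=
            setIntegral_congr_fun hEmeas fun x hx => Set.indicator_of_mem hx _
    -- second application: with b - f
    have hlb : ∫ x in E, (b - g x) ∂μ ≥ 0 := by
      set g₂ : X → ℝ := E.indicator (fun x => b - g x) with hg₂
      have hg₂meas : Measurable g₂ := (measurable_const.sub hg).indicator hEmeas
      have hg₂bd : ∀ x, |g₂ x| ≤ |B| + |b| := by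
        intro x
        rw [hg₂]
        by_cases hx : x ∈ E
        · rw [Set.indicator_of_mem hx]
          calc |b - g x| ≤ |b| + |g x| := abs_sub _ _
            _ ≤ |B| + |b| := by
              have := (hB x).trans (le_abs_self B); linarith
        · rw [Set.indicator_of_notMem hx, abs_zero]; positivity
      have hsum : ∀ x ∈ E, ∀ n, birkhoffSum T g₂ n x = n * b - birkhoffSum T g n x := by
        intro x hx n
        unfold birkhoffSum
        calc ∑ k ∈ Finset.range n, g₂ (T^[k] x) = ∑ k ∈ Finset.range n, (b - g (T^[k] x)) :=
              Finset.sum_congr rfl fun k _ => by rw [hg₂, Set.indicator_of_mem (hiter x hx k)]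
          _ = n * b - ∑ k ∈ Finset.range n, g (T^[k] x) := by
              rw [Finset.sum_sub_distrib, Finset.sum_const, Finset.card_range]
              push_cast; ring
      have hpos : ∀ x ∈ E, ∃ n, 0 < birkhoffSum T g₂ n x := by
        intro x hx
        have hcob : IsCoboundedUnder (· ≥ ·) atTop (a x) :=
          (bddu_of_abs_le (habd x)).isCoboundedUnder_ge
        have hfreq : ∃ᶠ n in atTop, a x n < b := frequently_lt_of_liminf_lt hcob hx.1
        obtain ⟨n, hn2, hn1⟩ := (hfreq.and_eventually (eventually_ge_atTop 1)).exists
        refine ⟨n, ?_⟩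
        have hn0 : (0:ℝ) < (n:ℝ) := by exact_mod_cast hn1
        have : birkhoffSum T g n x < b * n := by
          have := (div_lt_iff₀ hn0).1 hn2
          linarith
        rw [hsum x hx n]
        linarith [this]
      have hg₂0 : ∀ x ∉ E, g₂ x = 0 := fun x hx => Set.indicator_of_notMem hx _
      have h0 := key_integral_nonneg hT hTmp hg₂meas hg₂bd hEmeas hEinv hg₂0 hpos
      calc (0:ℝ) ≤ ∫ x in E, g₂ x ∂μ := h0
        _ = ∫ x in E, (b - g x) ∂μ :=
            setIntegral_congr_fun hEmeas fun x hx => Set.indicator_of_mem hx _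
    -- combine
    have hginteg : Integrable g μ :=
      (integrable_const B).mono' hg.aestronglyMeasurable
        (ae_of_all _ fun x => by rw [Real.norm_eq_abs]; exact hB x)
    have hio : IntegrableOn g E μ := hginteg.integrableOn
    have hc1 : ∫ x in E, (g x - c) ∂μ = ∫ x in E, g x ∂μ - c * (μ E).toReal := by
      rw [integral_sub hio (integrableOn_const (measure_ne_top μ E)),
        setIntegral_const, smul_eq_mul, measureReal_def]
      ring
    have hc2 : ∫ x in E, (b - g x) ∂μ = b * (μ E).toReal - ∫ x in E, g x ∂μ := by
      rw [integral_sub (integrableOn_const (C := b) (measure_ne_top μ E)) hio,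
        setIntegral_const, smul_eq_mul, measureReal_def]
      ring
    rw [hc1] at hub
    rw [hc2] at hlb
    have htr : (μ E).toReal = 0 := by
      nlinarith [ENNReal.toReal_nonneg (a := μ E)]
    have := measure_ne_top μ E
    rcases (ENNReal.toReal_eq_zero_iff _).1 htr with h | h
    · exact h
    · exact absurd h this
  -- conclude
  have hae : ∀ᵐ x ∂μ, ψ x = φ x := by
    rw [ae_iff]
    have hsub : {x | ¬ ψ x = φ x} ⊆
        ⋃ q : ℚ × ℚ, if (q.1 : ℝ) < (q.2 : ℝ) then {x | ψ x < q.1 ∧ (q.2:ℝ) < φ x} else ∅ := by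
      intro x hx
      have hlt : ψ x < φ x := by
        rcases lt_or_eq_of_le (liminf_le_limsup (bddu_of_abs_le (habd x))
          (bddl_of_abs_le (habd x))) with h | h
        · exact h
        · exact absurd h hx
      obtain ⟨q1, hq1a, hq1b⟩ := exists_rat_btwn hlt
      obtain ⟨q2, hq2a, hq2b⟩ := exists_rat_btwn hq1b
      refine Set.mem_iUnion.2 ⟨(q1, q2), ?_⟩
      rw [if_pos hq2a]
      exact ⟨hq1a, hq2b⟩
    refine measure_mono_null hsub (measure_iUnion_null fun q => ?_)
    split_ifs with hq
    · exact main _ _ hq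
    · exact measure_empty
  filter_upwards [hae] with x hx
  exact tendsto_of_liminf_eq_limsup hx rfl
    (bddu_of_abs_le (habd x)) (bddl_of_abs_le (habd x))

end Birkhoff3

section ThetaLemmas

variable {d : ℕ} {C : ℝ}

lemma Theta.dist_def (θ₁ θ₂ : Theta d C) : dist θ₁ θ₂ = thetaDist θ₁ θ₂ := rfl

lemma Theta.abs_sub_le (θ₁ θ₂ : Theta d C) (z : EucSp d) :
    |θ₁.1 z - θ₂.1 z| ≤ (1 + ‖z‖ ^ 2) * dist θ₁ θ₂ := by
  have hz : (0:ℝ) < 1 + ‖z‖ ^ 2 := by positivity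
  have h := le_ciSup (thetaDist_bddAbove θ₁ θ₂) z
  rw [div_le_iff₀ hz] at h
  rw [Theta.dist_def, mul_comm]
  exact h

lemma Theta.continuous_eval (v : EucSp d) : Continuous fun θ : Theta d C => θ.1 v := by
  have : LipschitzWith (Real.toNNReal (1 + ‖v‖ ^ 2)) (fun θ : Theta d C => θ.1 v) := by
    rw [lipschitzWith_iff_dist_le_mul]
    intro θ₁ θ₂
    rw [Real.dist_eq, Real.coe_toNNReal _ (by positivity)]
    exact Theta.abs_sub_le θ₁ θ₂ v
  exact this.continuous

lemma Theta.continuous_shift (x : EucSp d) :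
    Continuous (Theta.shift (d := d) (C := C) x) := by
  have : LipschitzWith (Real.toNNReal (2 + 3 * ‖x‖ ^ 2))
      (Theta.shift (d := d) (C := C) x) := by
    rw [lipschitzWith_iff_dist_le_mul]
    intro θ₁ θ₂
    rw [Real.coe_toNNReal _ (by positivity), Theta.dist_def]
    refine ciSup_le fun y => ?_
    have hD : (0:ℝ) ≤ dist θ₁ θ₂ := dist_nonneg
    have hy : (0:ℝ) < 1 + ‖y‖ ^ 2 := by positivity
    have h1 := Theta.abs_sub_le θ₁ θ₂ (y + x)
    have h2 := Theta.abs_sub_le θ₁ θ₂ x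
    have hyx : ‖y + x‖ ^ 2 ≤ 2 * ‖y‖ ^ 2 + 2 * ‖x‖ ^ 2 := by
      have := norm_add_le y x
      nlinarith [norm_nonneg y, norm_nonneg x, sq_nonneg (‖y‖ - ‖x‖),
        mul_self_le_mul_self (norm_nonneg (y + x)) this]
    have hnum : |(Theta.shift x θ₁).1 y - (Theta.shift x θ₂).1 y|
        ≤ (2 + 2 * ‖y‖ ^ 2 + 3 * ‖x‖ ^ 2) * dist θ₁ θ₂ := by
      have : (Theta.shift x θ₁).1 y - (Theta.shift x θ₂).1 y
          = (θ₁.1 (y + x) - θ₂.1 (y + x)) - (θ₁.1 x - θ₂.1 x) := by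
        simp only [Theta.shift]; ring
      rw [this]
      calc |(θ₁.1 (y + x) - θ₂.1 (y + x)) - (θ₁.1 x - θ₂.1 x)|
          ≤ |θ₁.1 (y + x) - θ₂.1 (y + x)| + |θ₁.1 x - θ₂.1 x| := abs_sub _ _
        _ ≤ (1 + ‖y + x‖ ^ 2) * dist θ₁ θ₂ + (1 + ‖x‖ ^ 2) * dist θ₁ θ₂ := by
            exact add_le_add h1 h2
        _ ≤ (2 + 2 * ‖y‖ ^ 2 + 3 * ‖x‖ ^ 2) * dist θ₁ θ₂ := by nlinarith
    rw [div_le_iff₀ hy]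
    calc |(Theta.shift x θ₁).1 y - (Theta.shift x θ₂).1 y|
        ≤ (2 + 2 * ‖y‖ ^ 2 + 3 * ‖x‖ ^ 2) * dist θ₁ θ₂ := hnum
      _ ≤ (2 + 3 * ‖x‖ ^ 2) * dist θ₁ θ₂ * (1 + ‖y‖ ^ 2) := by nlinarith [mul_nonneg (mul_nonneg hD (sq_nonneg ‖x‖)) (sq_nonneg ‖y‖)]
  exact this.continuous

lemma Theta.shift_shift (x y : EucSp d) (θ : Theta d C) :
    Theta.shift x (Theta.shift y θ) = Theta.shift (x + y) θ := by
  apply Subtype.ext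
  funext z
  simp only [Theta.shift, add_assoc]
  ring

lemma Theta.shift_zero (θ : Theta d C) : Theta.shift (0 : EucSp d) θ = θ := by
  apply Subtype.ext
  funext z
  simp only [Theta.shift, add_zero, θ.2.1, sub_zero]

end ThetaLemmas


section RatVec

/-- A vector with rational coordinates. -/
def ratVec (d : ℕ) (q : Fin d → ℚ) : EucSp d := WithLp.toLp 2 (fun i => (q i : ℝ))

lemma ratVec_add (d : ℕ) (q q' : Fin d → ℚ) :
    ratVec d (q + q') = ratVec d q + ratVec d q' := by
  ext i
  show ((q i + q' i : ℚ) : ℝ) = (q i : ℝ) + (q' i : ℝ)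
  push_cast
  ring

lemma ratVec_single (d : ℕ) (i : Fin d) :
    ratVec d (Pi.single i 1) = EuclideanSpace.single i (1:ℝ) := by
  ext j
  simp only [ratVec, PiLp.toLp_apply, EuclideanSpace.single_apply, Pi.single_apply]
  split_ifs <;> simp

lemma ratVec_approx {d : ℕ} (x : EucSp d) {δ : ℝ} (hδ : 0 < δ) :
    ∃ q : Fin d → ℚ, ‖x - ratVec d q‖ < δ := by
  set δ' : ℝ := δ / (Real.sqrt d + 1) with hδ'
  have hs : (0:ℝ) ≤ Real.sqrt d := Real.sqrt_nonneg _
  have hδ'pos : 0 < δ' := by positivity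
  have h := fun i : Fin d => exists_rat_near (x i) hδ'pos
  choose q hq using h
  refine ⟨q, ?_⟩
  have hnorm : ‖x - ratVec d q‖ ≤ Real.sqrt d * δ' := by
    rw [EuclideanSpace.norm_eq]
    have hterm : ∀ i : Fin d, ‖(x - ratVec d q) i‖ ^ 2 ≤ δ' ^ 2 := by
      intro i
      have hxi : (x - ratVec d q) i = x i - (q i : ℝ) := by simp [ratVec]
      rw [hxi, Real.norm_eq_abs]
      have h1 := (hq i).le
      nlinarith [abs_nonneg (x i - (q i : ℝ))]
    calc Real.sqrt (∑ i, ‖(x - ratVec d q) i‖ ^ 2)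
        ≤ Real.sqrt (∑ _i : Fin d, δ' ^ 2) :=
          Real.sqrt_le_sqrt (Finset.sum_le_sum fun i _ => hterm i)
      _ = Real.sqrt ((d : ℝ) * δ' ^ 2) := by
          rw [Finset.sum_const, Finset.card_univ, Fintype.card_fin, nsmul_eq_mul]
      _ = Real.sqrt d * δ' := by
          rw [Real.sqrt_mul (by positivity), Real.sqrt_sq hδ'pos.le]
  have hlt : Real.sqrt d * δ' < δ := by
    rw [hδ', mul_div_assoc']
    rw [div_lt_iff₀ (by positivity)]
    nlinarith
  exact lt_of_le_of_lt hnorm hlt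

end RatVec

/-- Passing from convergence along integer times to convergence along real times,
for Lipschitz functions. -/
lemma tendsto_div_real_of_nat {K F L : ℝ} (hK : 0 ≤ K) (f : ℝ → ℝ)
    (hLip : ∀ s t : ℝ, |f s - f t| ≤ K * |s - t|) (hF : |f 0| ≤ F)
    (h : Tendsto (fun n : ℕ => f n / n) atTop (𝓝 L)) :
    Tendsto (fun t : ℝ => f t / t) atTop (𝓝 L) := by
  have hF0 : 0 ≤ F := (abs_nonneg _).trans hF
  have h1 : Tendsto (fun t : ℝ => f (⌊t⌋₊ : ℝ) / (⌊t⌋₊ : ℝ)) atTop (𝓝 L) :=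
    h.comp tendsto_nat_floor_atTop
  have h2 : Tendsto (fun t : ℝ => f t / t - f (⌊t⌋₊:ℝ) / (⌊t⌋₊:ℝ)) atTop (𝓝 0) := by
    have hbnd : Tendsto (fun t : ℝ => (2 * K + F) / t) atTop (𝓝 0) :=
      tendsto_const_nhds.div_atTop tendsto_id
    refine squeeze_zero_norm' ?_ hbnd
    filter_upwards [eventually_ge_atTop (1:ℝ)] with t ht
    have ht0 : (0:ℝ) < t := lt_of_lt_of_le one_pos ht
    set n : ℕ := ⌊t⌋₊ with hn
    have hn1 : (1:ℝ) ≤ (n:ℝ) := by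
      have h1n : (1:ℕ) ≤ n := Nat.le_floor (by exact_mod_cast ht)
      exact_mod_cast h1n
    have hn0 : (0:ℝ) < (n:ℝ) := lt_of_lt_of_le one_pos hn1
    have hnt : (n:ℝ) ≤ t := Nat.floor_le ht0.le
    have htn : t - (n:ℝ) ≤ 1 := by
      have := Nat.lt_floor_add_one t
      rw [← hn] at this
      linarith
    have hftn : |f t - f n| ≤ K := by
      calc |f t - f n| ≤ K * |t - n| := hLip t n
        _ ≤ K * 1 := by
            refine mul_le_mul_of_nonneg_left ?_ hK
            rw [abs_of_nonneg (by linarith)]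
            exact htn
        _ = K := mul_one K
    have hfn : |f n| ≤ K * n + F := by
      calc |f n| = |(f n - f 0) + f 0| := by norm_num
        _ ≤ |f n - f 0| + |f 0| := abs_add_le _ _
        _ ≤ K * |(n:ℝ) - 0| + F := add_le_add (hLip n 0) hF
        _ = K * n + F := by rw [sub_zero, abs_of_nonneg hn0.le]
    have key : f t / t - f n / n = (f t - f n) / t - f n * ((t - n) / (t * n)) := by
      field_simp
      ring
    rw [Real.norm_eq_abs, key]
    have hA : |(f t - f n) / t| ≤ K / t := by
      rw [abs_div, abs_of_nonneg ht0.le]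
      gcongr
    have hB : |f n * ((t - n) / (t * n))| ≤ K / t + F / t := by
      have hd1 : |f n * ((t - n) / (t * n))| = |f n| * ((t - n) / (t * n)) := by
        rw [abs_mul, abs_div, abs_of_nonneg (by positivity : (0:ℝ) ≤ t * n),
          abs_of_nonneg (by linarith : (0:ℝ) ≤ t - n)]
      have hd2 : |f n| * ((t - n) / (t * n)) ≤ (K * n + F) * (1 / (t * n)) := by
        refine mul_le_mul hfn ?_ (div_nonneg (by linarith) (by positivity)) (by positivity)
        gcongr
      have hd3 : (K * n + F) * (1 / (t * n)) = K / t + F / (t * n) := by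
        field_simp
      have hd4 : F / (t * n) ≤ F / t := by
        apply div_le_div_of_nonneg_left hF0 ht0
        nlinarith
      rw [hd1]
      calc |f n| * ((t - n) / (t * n)) ≤ (K * n + F) * (1 / (t * n)) := hd2
        _ = K / t + F / (t * n) := hd3
        _ ≤ K / t + F / t := by linarith
    calc |(f t - f n) / t - f n * ((t - n) / (t * n))|
        ≤ |(f t - f n) / t| + |f n * ((t - n) / (t * n))| := abs_sub _ _
      _ ≤ K / t + (K / t + F / t) := add_le_add hA hB
      _ = (2 * K + F) / t := by field_simp; ring
  have := h2.add h1
  simp only [sub_add_cancel, zero_add] at this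
  exact this

set_option maxHeartbeats 4000000 in
set_option synthInstance.maxHeartbeats 400000 in
/-- For a `τ̃`-invariant measure `μ` on `Ω × Θ_C` there is a bounded measurable random
vector `r` such that `μ`-a.s., `θ(tv)/t → ⟨r(ω, θ), v⟩` for every direction `v`. -/
theorem stmt12 {d : ℕ} {Ω : Type*} [TopologicalSpace Ω] [PolishSpace Ω]
    [MeasurableSpace Ω] [BorelSpace Ω]
    (ℙ : Measure Ω) [IsProbabilityMeasure ℙ]
    (τ : EucSp d → Ω → Ω)
    (hτgrp : ∀ x y ω, τ (x + y) ω = τ x (τ y ω))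
    (hτzero : ∀ ω, τ 0 ω = ω)
    (hτcont : ∀ x, Continuous (τ x))
    (hτmp : ∀ x, MeasurePreserving (τ x) ℙ ℙ)
    (hτmeas : Measurable fun p : EucSp d × Ω => τ p.1 p.2)
    (C : ℝ) (hC : 0 < C)
    (μ : Measure (Ω × Theta d C)) [IsProbabilityMeasure μ]
    (hinv : ∀ x : EucSp d,
      μ.map (fun p : Ω × Theta d C => (τ x p.1, Theta.shift x p.2)) = μ) :
    ∃ r : Ω × Theta d C → EucSp d, Measurable r ∧ (∀ p, ‖r p‖ ≤ C) ∧
      ∀ᵐ p ∂μ, ∀ v : EucSp d,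
        Tendsto (fun t : ℝ => (p.2).1 (t • v) / t) atTop (𝓝 ⟪r p, v⟫) := by
  classical
  -- the product shift
  set T : EucSp d → (Ω × Theta d C) → (Ω × Theta d C) :=
    fun x p => (τ x p.1, Theta.shift x p.2) with hT
  have hTmeas : ∀ x, Measurable (T x) := fun x =>
    ((hτcont x).measurable.comp measurable_fst).prodMk
      ((Theta.continuous_shift x).measurable.comp measurable_snd)
  have hTmp : ∀ x, MeasurePreserving (T x) μ μ := fun x => ⟨hTmeas x, hinv x⟩
  have hTgrp : ∀ x y p, T x (T y p) = T (x + y) p := by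
    intro x y p
    refine Prod.ext ?_ ?_
    · exact (hτgrp x y p.1).symm
    · exact Theta.shift_shift x y p.2
  have hTiter : ∀ (v : EucSp d) (n : ℕ) p, (T v)^[n] p = T (n • v) p := by
    intro v n p
    induction n with
    | zero => simp [hT, hτzero, Theta.shift_zero]
    | succ n ih =>
      rw [Function.iterate_succ_apply', ih, hTgrp, add_comm, ← succ_nsmul]
  -- evaluation maps
  have hgmeas : ∀ v : EucSp d, Measurable fun q : Ω × Theta d C => q.2.1 v :=
    fun v => ((Theta.continuous_eval v).comp continuous_snd).measurable
  have hgbd : ∀ (v : EucSp d) (q : Ω × Theta d C), |q.2.1 v| ≤ C * ‖v‖ := by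
    intro v q
    have h := q.2.2.2 v 0
    rw [q.2.2.1, sub_zero, sub_zero] at h
    exact h
  -- telescoping: Birkhoff sums of evaluation maps
  have hsum : ∀ (v : EucSp d) (n : ℕ) (p : Ω × Theta d C),
      birkhoffSum (T v) (fun q => q.2.1 v) n p = p.2.1 (n • v) := by
    intro v n p
    have hterm : ∀ k, (fun q : Ω × Theta d C => q.2.1 v) ((T v)^[k] p)
        = p.2.1 ((k+1) • v) - p.2.1 (k • v) := by
      intro k
      rw [hTiter]
      show (Theta.shift (k • v) p.2).1 v = _
      simp only [Theta.shift]
      rw [succ_nsmul, add_comm (k • v) v]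
    unfold birkhoffSum
    rw [Finset.sum_congr rfl (fun k _ => hterm k),
      Finset.sum_range_sub (fun k : ℕ => p.2.1 (k • v))]
    simp [p.2.2.1]
  -- bound on averages
  have habd : ∀ (v : EucSp d) (p : Ω × Theta d C) (n : ℕ), |p.2.1 (n • v) / (n : ℝ)| ≤ C * ‖v‖ := by
    intro v p n
    rcases Nat.eq_zero_or_pos n with rfl | hn
    · simp [p.2.2.1]
      positivity
    · have hn0 : (0:ℝ) < (n:ℝ) := by exact_mod_cast hn
      rw [abs_div, abs_of_nonneg hn0.le, div_le_iff₀ hn0]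
      have h1 := hgbd (n • v) p
      have h2 : ‖(n : ℕ) • v‖ = (n:ℝ) * ‖v‖ := by
        rw [← Nat.cast_smul_eq_nsmul ℝ, norm_smul, Real.norm_natCast]
      rw [h2] at h1
      calc |p.2.1 (n • v)| ≤ C * ((n:ℝ) * ‖v‖) := h1
        _ = C * ‖v‖ * (n:ℝ) := by ring
  -- the asymptotic slope in direction v
  set φ : EucSp d → (Ω × Theta d C) → ℝ :=
    fun v p => limsup (fun n : ℕ => p.2.1 (n • v) / (n : ℝ)) atTop with hφ
  have hφmeas : ∀ v, Measurable (φ v) :=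
    fun v => Measurable.limsup fun n => (hgmeas (n • v)).div measurable_const
  have hbirk : ∀ v, ∀ᵐ p ∂μ, Tendsto (fun n : ℕ => p.2.1 (n • v) / (n : ℝ)) atTop (𝓝 (φ v p)) := by
    intro v
    have h := birkhoff_ae_tendsto (hTmeas v) (hTmp v) (hgmeas v) (hgbd v)
    refine h.mono fun p hp => ?_
    have he : (fun n : ℕ => birkhoffSum (T v) (fun q : Ω × Theta d C => q.2.1 v) n p / n)
        = fun n : ℕ => p.2.1 (n • v) / (n : ℝ) := by
      funext n; rw [hsum]
    rw [he] at hp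
    exact hp
  have hφbd : ∀ v p, |φ v p| ≤ C * ‖v‖ := by
    intro v p
    rw [abs_le]
    constructor
    · refine le_limsup_of_frequently_le (Frequently.of_forall fun n => (abs_le.1 (habd v p n)).1)
        (bddu_of_abs_le (habd v p))
    · refine limsup_le_of_le ((bddl_of_abs_le (habd v p)).isCoboundedUnder_le)
        (Eventually.of_forall fun n => (abs_le.1 (habd v p n)).2)
  have hφzero : ∀ p, φ 0 p = 0 := by
    intro p
    have : (fun n : ℕ => p.2.1 (n • (0 : EucSp d)) / (n : ℝ)) = fun _ => (0:ℝ) := by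
      funext n; simp [p.2.2.1]
    rw [hφ]
    simp only [this]
    exact limsup_const 0
  have hφinv : ∀ (v x : EucSp d) (p : Ω × Theta d C), φ v (T x p) = φ v p := by
    intro v x p
    have hdiff : Tendsto (fun n : ℕ => (T x p).2.1 (n • v) / (n : ℝ) - p.2.1 (n • v) / (n : ℝ))
        atTop (𝓝 0) := by
      have hbnd : Tendsto (fun n : ℕ => (2 * (C * ‖x‖)) / (n:ℝ)) atTop (𝓝 0) := by
        simpa using tendsto_const_nhds.div_atTop (tendsto_natCast_atTop_atTop (R := ℝ))
      refine squeeze_zero_norm' ?_ hbnd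
      filter_upwards [eventually_ge_atTop 1] with n hn
      have hn0 : (0:ℝ) < (n:ℝ) := by exact_mod_cast hn
      have h1 : (T x p).2.1 (n • v) = p.2.1 (n • v + x) - p.2.1 x := rfl
      have h2 : |p.2.1 (n • v + x) - p.2.1 (n • v)| ≤ C * ‖x‖ := by
        have := p.2.2.2 (n • v + x) (n • v)
        simpa using this
      have h3 : |p.2.1 x| ≤ C * ‖x‖ := hgbd x p
      rw [Real.norm_eq_abs, h1, div_sub_div_same, abs_div, abs_of_nonneg hn0.le]
      gcongr
      have heq : p.2.1 (n • v + x) - p.2.1 x - p.2.1 (n • v)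
          = (p.2.1 (n • v + x) - p.2.1 (n • v)) - p.2.1 x := by ring
      rw [heq]
      calc |(p.2.1 (n • v + x) - p.2.1 (n • v)) - p.2.1 x|
          ≤ |p.2.1 (n • v + x) - p.2.1 (n • v)| + |p.2.1 x| := abs_sub _ _
        _ ≤ 2 * (C * ‖x‖) := by linarith
    exact limsup_eq_limsup_of_tendsto_sub_zero (habd v (T x p)) (habd v p) hdiff
  -- almost-everywhere additivity of φ
  have hadd : ∀ v w : EucSp d, ∀ᵐ p ∂μ, φ (v + w) p = φ v p + φ w p := by
    intro v w
    set c : ℕ → (Ω × Theta d C) → ℝ :=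
      fun n p => p.2.1 (n • (v + w)) / (n : ℝ) - p.2.1 (n • v) / (n : ℝ) with hc
    set D : ℕ → (Ω × Theta d C) → ℝ :=
      fun n p => p.2.1 (n • w) / (n : ℝ) - φ w p with hD
    have hDmeas : ∀ n, Measurable (D n) :=
      fun n => ((hgmeas (n • w)).div measurable_const).sub (hφmeas w)
    have hDbd : ∀ n p, |D n p| ≤ 2 * (C * ‖w‖) := by
      intro n p
      calc |D n p| ≤ |p.2.1 (n • w) / (n : ℝ)| + |φ w p| := abs_sub _ _
        _ ≤ C * ‖w‖ + C * ‖w‖ := add_le_add (habd w p n) (hφbd w p)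
        _ = 2 * (C * ‖w‖) := by ring
    -- the composition identity: D n (T (n • v) p) = c n p - φ w p
    have hDT : ∀ n p, D n (T (n • v) p) = c n p - φ w p := by
      intro n p
      calc D n (T (n • v) p)
          = (p.2.1 (n • w + n • v) - p.2.1 (n • v)) / (n:ℝ) - φ w (T (n • v) p) := rfl
        _ = (p.2.1 (n • w + n • v) - p.2.1 (n • v)) / (n:ℝ) - φ w p := by
            rw [hφinv]
        _ = c n p - φ w p := by
            have h2 : n • (v + w) = n • w + n • v := by rw [smul_add, add_comm]
            show _ = (p.2.1 (n • (v + w)) / (n:ℝ) - p.2.1 (n • v) / (n:ℝ)) - φ w p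
            rw [h2]
            ring
    -- L¹ convergence of D n to 0
    have hDae : ∀ᵐ p ∂μ, Tendsto (fun n => |D n p|) atTop (𝓝 0) := by
      filter_upwards [hbirk w] with p hp
      have h0 := hp.sub_const (φ w p)
      rw [sub_self] at h0
      have h1 : Tendsto (fun n => D n p) atTop (𝓝 0) := h0
      simpa using h1.abs
    have hDL1 : Tendsto (fun n => ∫ p, |D n p| ∂μ) atTop (𝓝 0) := by
      have h := tendsto_integral_of_dominated_convergence (μ := μ)
        (F := fun n p => |D n p|) (f := fun _ => (0:ℝ))
        (bound := fun _ => 2 * (C * ‖w‖))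
        (fun n => ((hDmeas n).abs).aestronglyMeasurable)
        (integrable_const _)
        (fun n => ae_of_all _ fun p => by
          rw [Real.norm_eq_abs, abs_abs]; exact hDbd n p)
        hDae
      simpa using h
    -- ∫ |D n ∘ T (n•v)| = ∫ |D n|
    have hcomp : ∀ n, ∫ p, |c n p - φ w p| ∂μ = ∫ p, |D n p| ∂μ := by
      intro n
      have h1 : ∀ p, |c n p - φ w p| = |D n (T (n • v) p)| := fun p => by rw [hDT]
      calc ∫ p, |c n p - φ w p| ∂μ = ∫ p, |D n (T (n • v) p)| ∂μ := by
            exact integral_congr_ae (ae_of_all _ h1)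
        _ = ∫ p, |D n p| ∂(μ.map (T (n • v))) :=
            (integral_map (hTmeas _).aemeasurable ((hDmeas n).abs.aestronglyMeasurable)).symm
        _ = ∫ p, |D n p| ∂μ := by rw [(hTmp _).map_eq]
    -- a.e. convergence of c n to φ(v+w) - φ v
    set L : (Ω × Theta d C) → ℝ := fun p => φ (v + w) p - φ v p with hL
    have hLmeas : Measurable L := (hφmeas (v + w)).sub (hφmeas v)
    have hLbd : ∀ p, |L p| ≤ C * ‖v + w‖ + C * ‖v‖ := fun p =>
      (abs_sub _ _).trans (add_le_add (hφbd (v + w) p) (hφbd v p))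
    have hcbd : ∀ n p, |c n p| ≤ C * ‖v + w‖ + C * ‖v‖ := fun n p =>
      (abs_sub _ _).trans (add_le_add (habd (v + w) p n) (habd v p n))
    have hcmeas : ∀ n, Measurable (c n) :=
      fun n => ((hgmeas (n • (v + w))).div measurable_const).sub
        ((hgmeas (n • v)).div measurable_const)
    have hcae : ∀ᵐ p ∂μ, Tendsto (fun n => |c n p - L p|) atTop (𝓝 0) := by
      filter_upwards [hbirk (v + w), hbirk v] with p hp hq
      have h0 := (hp.sub hq).sub_const (L p)
      have h2 : (φ (v + w) p - φ v p) - L p = 0 := by simp [hL]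
      rw [h2] at h0
      have h1 : Tendsto (fun n => c n p - L p) atTop (𝓝 0) := h0
      simpa using h1.abs
    have hcL1 : Tendsto (fun n => ∫ p, |c n p - L p| ∂μ) atTop (𝓝 0) := by
      have h := tendsto_integral_of_dominated_convergence (μ := μ)
        (F := fun n p => |c n p - L p|) (f := fun _ => (0:ℝ))
        (bound := fun _ => 2 * (C * ‖v + w‖ + C * ‖v‖))
        (fun n => (((hcmeas n).sub hLmeas).abs).aestronglyMeasurable)
        (integrable_const _)
        (fun n => ae_of_all _ fun p => by
          rw [Real.norm_eq_abs, abs_abs]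
          calc |c n p - L p| ≤ |c n p| + |L p| := abs_sub _ _
            _ ≤ 2 * (C * ‖v + w‖ + C * ‖v‖) := by
                have := hcbd n p; have := hLbd p; linarith)
        hcae
      simpa using h
    -- triangle inequality and conclusion
    have hLφw : Integrable (fun p => |L p - φ w p|) μ := by
      refine (integrable_const (C * ‖v + w‖ + C * ‖v‖ + C * ‖w‖)).mono'
        ((hLmeas.sub (hφmeas w)).abs).aestronglyMeasurable (ae_of_all _ fun p => ?_)
      rw [Real.norm_eq_abs, abs_abs]
      calc |L p - φ w p| ≤ |L p| + |φ w p| := abs_sub _ _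
        _ ≤ C * ‖v + w‖ + C * ‖v‖ + C * ‖w‖ := by
            have := hLbd p; have := hφbd w p; linarith
    have hzero : ∫ p, |L p - φ w p| ∂μ = 0 := by
      refine le_antisymm ?_ (integral_nonneg fun p => abs_nonneg _)
      have hstep : ∀ n, ∫ p, |L p - φ w p| ∂μ
          ≤ ∫ p, |c n p - L p| ∂μ + ∫ p, |c n p - φ w p| ∂μ := by
        intro n
        have hint1 : Integrable (fun p => |c n p - L p|) μ := by
          refine (integrable_const (2 * (C * ‖v + w‖ + C * ‖v‖))).mono'
            (((hcmeas n).sub hLmeas).abs).aestronglyMeasurable (ae_of_all _ fun p => ?_)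
          rw [Real.norm_eq_abs, abs_abs]
          calc |c n p - L p| ≤ |c n p| + |L p| := abs_sub _ _
            _ ≤ 2 * (C * ‖v + w‖ + C * ‖v‖) := by
                have := hcbd n p; have := hLbd p; linarith
        have hint2 : Integrable (fun p => |c n p - φ w p|) μ := by
          refine (integrable_const (C * ‖v + w‖ + C * ‖v‖ + C * ‖w‖)).mono'
            (((hcmeas n).sub (hφmeas w)).abs).aestronglyMeasurable (ae_of_all _ fun p => ?_)
          rw [Real.norm_eq_abs, abs_abs]
          calc |c n p - φ w p| ≤ |c n p| + |φ w p| := abs_sub _ _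
            _ ≤ C * ‖v + w‖ + C * ‖v‖ + C * ‖w‖ := by
                have := hcbd n p; have := hφbd w p; linarith
        calc ∫ p, |L p - φ w p| ∂μ
            ≤ ∫ p, (|c n p - L p| + |c n p - φ w p|) ∂μ := by
              refine integral_mono hLφw (hint1.add hint2) fun p => ?_
              calc |L p - φ w p| = |(c n p - φ w p) - (c n p - L p)| := by ring_nf
                _ ≤ |c n p - φ w p| + |c n p - L p| := abs_sub _ _
                _ = |c n p - L p| + |c n p - φ w p| := by ring
          _ = ∫ p, |c n p - L p| ∂μ + ∫ p, |c n p - φ w p| ∂μ := integral_add hint1 hint2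
      have hlim : Tendsto (fun n => ∫ p, |c n p - L p| ∂μ + ∫ p, |c n p - φ w p| ∂μ)
          atTop (𝓝 0) := by
        have h2 : Tendsto (fun n => ∫ p, |c n p - φ w p| ∂μ) atTop (𝓝 0) := by
          have : (fun n => ∫ p, |c n p - φ w p| ∂μ) = fun n => ∫ p, |D n p| ∂μ := by
            funext n; exact hcomp n
          rw [this]; exact hDL1
        simpa using hcL1.add h2
      exact ge_of_tendsto hlim (Eventually.of_forall hstep)
    have := (integral_eq_zero_iff_of_nonneg (fun p => abs_nonneg _) hLφw).1 hzero
    filter_upwards [this] with p hp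
    have h0 : |L p - φ w p| = 0 := hp
    have := abs_eq_zero.1 h0
    simp only [hL] at this
    linarith
  -- construction of r
  set e : Fin d → EucSp d := fun i => EuclideanSpace.single i (1:ℝ) with he
  set r₀ : (Ω × Theta d C) → EucSp d := fun p => ∑ i, φ (e i) p • e i with hr₀
  have hr₀meas : Measurable r₀ :=
    Finset.measurable_sum _ fun i _ => (hφmeas (e i)).smul_const (e i)
  set r : (Ω × Theta d C) → EucSp d := fun p => if ‖r₀ p‖ ≤ C then r₀ p else 0 with hrdef
  have hrmeas : Measurable r :=
    Measurable.ite (measurableSet_le hr₀meas.norm measurable_const) hr₀meas measurable_const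
  -- passing from integer to real times
  have hnat2real : ∀ (u : EucSp d) (p : Ω × Theta d C),
      Tendsto (fun n : ℕ => p.2.1 (n • u) / (n:ℝ)) atTop (𝓝 (φ u p)) →
      Tendsto (fun t : ℝ => p.2.1 (t • u) / t) atTop (𝓝 (φ u p)) := by
    intro u p hp
    have hLip : ∀ s t : ℝ, |p.2.1 (s • u) - p.2.1 (t • u)| ≤ (C * ‖u‖) * |s - t| := by
      intro s t
      have h := p.2.2.2 (s • u) (t • u)
      rw [← sub_smul, norm_smul, Real.norm_eq_abs] at h
      calc |p.2.1 (s • u) - p.2.1 (t • u)| ≤ C * (|s - t| * ‖u‖) := h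
        _ = (C * ‖u‖) * |s - t| := by ring
    have hF : |p.2.1 ((0:ℝ) • u)| ≤ 1 := by
      rw [zero_smul, p.2.2.1]
      norm_num
    refine tendsto_div_real_of_nat (by positivity) _ hLip hF ?_
    have hcast : (fun n : ℕ => p.2.1 ((n:ℝ) • u) / (n:ℝ))
        = fun n : ℕ => p.2.1 (n • u) / (n:ℝ) := by
      funext n
      rw [Nat.cast_smul_eq_nsmul]
    rw [hcast]
    exact hp
  refine ⟨r, hrmeas, fun p => ?_, ?_⟩
  · rw [hrdef]
    simp only []
    split_ifs with h
    · exact h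
    · simpa using hC.le
  -- the almost sure event
  have hcnt1 : ∀ᵐ p ∂μ, ∀ q q' : Fin d → ℚ,
      φ (ratVec d q + ratVec d q') p = φ (ratVec d q) p + φ (ratVec d q') p :=
    ae_all_iff.2 fun q => ae_all_iff.2 fun q' => hadd _ _
  have hcnt2 : ∀ᵐ p ∂μ, ∀ q : Fin d → ℚ,
      Tendsto (fun n : ℕ => p.2.1 (n • ratVec d q) / (n:ℝ)) atTop (𝓝 (φ (ratVec d q) p)) :=
    ae_all_iff.2 fun q => hbirk _
  filter_upwards [hcnt1, hcnt2] with p h1 h2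
  -- rational linearity of φ at p
  have hlin : ∀ q : Fin d → ℚ, φ (ratVec d q) p = ∑ i, (q i : ℝ) * φ (e i) p := by
    have hℓadd : ∀ q q' : Fin d → ℚ, φ (ratVec d (q + q')) p
        = φ (ratVec d q) p + φ (ratVec d q') p := by
      intro q q'
      rw [ratVec_add]
      exact h1 q q'
    set ℓ : (Fin d → ℚ) →+ ℝ := AddMonoidHom.mk' (fun q => φ (ratVec d q) p) hℓadd with hℓ
    have hsingle : ∀ (i : Fin d) (a : ℚ),
        (Pi.single i a : Fin d → ℚ) = a • (Pi.single i (1:ℚ) : Fin d → ℚ) := by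
      intro i a
      rw [← Pi.single_smul, smul_eq_mul, mul_one]
    intro q
    calc φ (ratVec d q) p = ℓ.toRatLinearMap q := rfl
      _ = ∑ i, ℓ.toRatLinearMap (Pi.single i (q i)) := by
          conv_lhs => rw [← Finset.univ_sum_single q]
          exact map_sum _ _ _
      _ = ∑ i, (q i : ℝ) * φ (e i) p := by
          refine Finset.sum_congr rfl fun i _ => ?_
          rw [hsingle i (q i), LinearMap.map_smul]
          have hei : ℓ.toRatLinearMap (Pi.single i (1:ℚ)) = φ (e i) p := by
            show φ (ratVec d (Pi.single i 1)) p = φ (e i) p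
            rw [ratVec_single]
          rw [hei, Rat.smul_def]
  -- inner products with r₀
  have hinner : ∀ q : Fin d → ℚ, (inner ℝ (r₀ p) (ratVec d q) : ℝ) = φ (ratVec d q) p := by
    intro q
    rw [hlin q, hr₀]
    simp only []
    rw [sum_inner]
    refine Finset.sum_congr rfl fun i _ => ?_
    rw [real_inner_smul_left, he]
    simp only []
    rw [EuclideanSpace.inner_single_left]
    have : (ratVec d q) i = (q i : ℝ) := rfl
    rw [this]
    simp [mul_comm]
  -- norm bound for r₀ p
  have hsq : ‖r₀ p‖ ^ 2 ≤ C * ‖r₀ p‖ := by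
    refine le_of_forall_pos_le_add fun ε hε => ?_
    have hδpos : 0 < ε / (C + ‖r₀ p‖ + 1) := by positivity
    obtain ⟨q, hq⟩ := ratVec_approx (r₀ p) hδpos
    set u := ratVec d q with hu
    set δ := ε / (C + ‖r₀ p‖ + 1) with hδ
    have e0 : (inner ℝ (r₀ p) u : ℝ) = φ u p := hinner q
    have e1 : |φ u p| ≤ C * ‖u‖ := hφbd u p
    have e2 : ‖u‖ ≤ ‖r₀ p‖ + δ := by
      have h3 : u = r₀ p - (r₀ p - u) := by abel
      calc ‖u‖ = ‖r₀ p - (r₀ p - u)‖ := by rw [← h3]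
        _ ≤ ‖r₀ p‖ + ‖r₀ p - u‖ := norm_sub_le _ _
        _ ≤ ‖r₀ p‖ + δ := by linarith [hq.le]
    have e3 : (inner ℝ (r₀ p) (r₀ p) : ℝ)
        = (inner ℝ (r₀ p) u : ℝ) + (inner ℝ (r₀ p) (r₀ p - u) : ℝ) := by
      rw [← inner_add_right]
      congr 1
      abel
    have e4 : (inner ℝ (r₀ p) (r₀ p - u) : ℝ) ≤ ‖r₀ p‖ * ‖r₀ p - u‖ := real_inner_le_norm _ _
    have e5 : (C + ‖r₀ p‖) * δ ≤ ε := by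
      rw [hδ, mul_div_assoc']
      rw [div_le_iff₀ (by positivity)]
      nlinarith [norm_nonneg (r₀ p), hC]
    calc ‖r₀ p‖ ^ 2 = (inner ℝ (r₀ p) (r₀ p) : ℝ) := (real_inner_self_eq_norm_sq _).symm
      _ = (inner ℝ (r₀ p) u : ℝ) + (inner ℝ (r₀ p) (r₀ p - u) : ℝ) := e3
      _ ≤ C * ‖u‖ + ‖r₀ p‖ * ‖r₀ p - u‖ := by
          have := (abs_le.1 e1).2
          rw [e0]
          linarith [e4]
      _ ≤ C * (‖r₀ p‖ + δ) + ‖r₀ p‖ * δ := by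
          have h6 : ‖r₀ p‖ * ‖r₀ p - u‖ ≤ ‖r₀ p‖ * δ :=
            mul_le_mul_of_nonneg_left hq.le (norm_nonneg _)
          have h7 : C * ‖u‖ ≤ C * (‖r₀ p‖ + δ) := mul_le_mul_of_nonneg_left e2 hC.le
          linarith
      _ ≤ C * ‖r₀ p‖ + ε := by nlinarith [e5]
  have hr₀norm : ‖r₀ p‖ ≤ C := by
    nlinarith [norm_nonneg (r₀ p), hC, hsq, sq_nonneg (‖r₀ p‖ - C)]
  have hrp : r p = r₀ p := if_pos hr₀norm
  rw [hrp]
  -- final convergence for every direction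
  intro v
  rw [Metric.tendsto_nhds]
  intro ε hε
  have hδpos : 0 < ε / (3 * C + 3) := by positivity
  obtain ⟨q, hq⟩ := ratVec_approx v hδpos
  set u := ratVec d q with hu
  set δ := ε / (3 * C + 3) with hδ
  have h3 : Tendsto (fun t : ℝ => p.2.1 (t • u) / t) atTop (𝓝 (φ u p)) :=
    hnat2real u p (h2 q)
  have h4 : (inner ℝ (r₀ p) u : ℝ) = φ u p := hinner q
  have hCδ : C * δ < ε / 3 := by
    rw [hδ, mul_div_assoc']
    rw [div_lt_iff₀ (by positivity)]
    nlinarith [hC, hε]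
  filter_upwards [Metric.tendsto_nhds.mp h3 (ε/3) (by positivity), eventually_ge_atTop (1:ℝ)]
    with t h5 ht
  have ht0 : (0:ℝ) < t := lt_of_lt_of_le one_pos ht
  rw [Real.dist_eq] at h5 ⊢
  have a1 : |p.2.1 (t • v) / t - p.2.1 (t • u) / t| ≤ C * δ := by
    rw [div_sub_div_same, abs_div, abs_of_nonneg ht0.le]
    have hlp := p.2.2.2 (t • v) (t • u)
    rw [← smul_sub, norm_smul, Real.norm_eq_abs, abs_of_nonneg ht0.le] at hlp
    rw [div_le_iff₀ ht0]
    calc |p.2.1 (t • v) - p.2.1 (t • u)| ≤ C * (t * ‖v - u‖) := hlp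
      _ ≤ C * (t * δ) := by
          have := hq.le
          have h8 : t * ‖v - u‖ ≤ t * δ := mul_le_mul_of_nonneg_left this ht0.le
          exact mul_le_mul_of_nonneg_left h8 hC.le
      _ = C * δ * t := by ring
  have a2 : |(inner ℝ (r₀ p) u : ℝ) - (inner ℝ (r₀ p) v : ℝ)| ≤ C * δ := by
    rw [← inner_sub_right]
    calc |(inner ℝ (r₀ p) (u - v) : ℝ)| ≤ ‖r₀ p‖ * ‖u - v‖ := abs_real_inner_le_norm _ _
      _ ≤ C * δ := by
          rw [norm_sub_rev]
          exact mul_le_mul hr₀norm hq.le (norm_nonneg _) hC.le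
  calc |p.2.1 (t • v) / t - (inner ℝ (r₀ p) v : ℝ)|
      ≤ |p.2.1 (t • v) / t - p.2.1 (t • u) / t|
        + |p.2.1 (t • u) / t - (inner ℝ (r₀ p) v : ℝ)| := abs_sub_le _ _ _
    _ ≤ |p.2.1 (t • v) / t - p.2.1 (t • u) / t|
        + (|p.2.1 (t • u) / t - φ u p| + |φ u p - (inner ℝ (r₀ p) v : ℝ)|) := by
        have := abs_sub_le (p.2.1 (t • u) / t) (φ u p) ((inner ℝ (r₀ p) v : ℝ))
        linarith
    _ < ε := by
        have b1 : |φ u p - (inner ℝ (r₀ p) v : ℝ)| ≤ C * δ := by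
          rw [← h4]
          exact a2
        have b2 : |p.2.1 (t • u) / t - φ u p| < ε / 3 := h5
        have := a1
        linarith

end
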